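/- Let m ≥ 2 and n ≥ 1 be integers with m ≠ n + 1, and set A = 4m³ − 4(2n+1)m² + (8n² + 6n + 1)m − n(2n+1)², B = −12m³ + 4(6n+5)m² − (16n² + 22n + 7)m + n(4n² + 8n + 3), C = 2(m−1)(6m² − (10n+7)m + (2n+1)²), D = 2(m−1)²(2n − 2m + 1). Then for real numbers x₁, x₂, c with x₁ ≠ 0 and x₂ ≠ 0, the triple (x₁, x₂, c) solves the Einstein system for D(m,n) if and only if c = (n·x₁² − m + 1)/(4(m−n−1)·x₁), x₂ = ((2m−2n−1)·x₁² − 4(m−n−1)·x₁ + 2(m−1))/((2n+1)·x₁), and (x₁ − 1)·(A·x₁³ + B·x₁² + C·x₁ + D) = 0. -/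

import Mathlib

/-- For m ≥ 2, n ≥ 1, m ≠ n + 1 and x₁ ≠ 0, x₂ ≠ 0, the triple (x₁, x₂, c) solves
the Einstein system for D(m,n) iff c and x₂ are given by the stated rational
expressions in x₁ and x₁ satisfies (x₁ − 1)(A x₁³ + B x₁² + C x₁ + D) = 0. -/
theorem einstein_Dmn_reduction (m n : ℕ) (hm : 2 ≤ m) (hn : 1 ≤ n) (hmn : m ≠ n + 1)
    (A B C D : ℝ)
    (hA : A = 4 * (m : ℝ)^3 - 4 * (2 * (n : ℝ) + 1) * (m : ℝ)^2
      + (8 * (n : ℝ)^2 + 6 * (n : ℝ) + 1) * (m : ℝ) - (n : ℝ) * (2 * (n : ℝ) + 1)^2)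
    (hB : B = -12 * (m : ℝ)^3 + 4 * (6 * (n : ℝ) + 5) * (m : ℝ)^2
      - (16 * (n : ℝ)^2 + 22 * (n : ℝ) + 7) * (m : ℝ)
      + (n : ℝ) * (4 * (n : ℝ)^2 + 8 * (n : ℝ) + 3))
    (hC : C = 2 * ((m : ℝ) - 1) * (6 * (m : ℝ)^2 - (10 * (n : ℝ) + 7) * (m : ℝ)
      + (2 * (n : ℝ) + 1)^2))
    (hD : D = 2 * ((m : ℝ) - 1)^2 * (2 * (n : ℝ) - 2 * (m : ℝ) + 1)) :
    ∀ x₁ x₂ c : ℝ, x₁ ≠ 0 → x₂ ≠ 0 →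
      (((1/4) * (((n : ℝ) / ((m : ℝ) - 1)) * x₁^2 - 1)
          = c * (1 - (n : ℝ) / ((m : ℝ) - 1)) * x₁ ∧
        (1/4) * (((m : ℝ) / ((n : ℝ) + 1)) * x₂^2 - 1)
          = c * (1 - (m : ℝ) / ((n : ℝ) + 1)) * x₂ ∧
        ((2 * (m : ℝ) - 1) / (4 * ((m : ℝ) - (n : ℝ) - 1))) * x₁
          - ((2 * (n : ℝ) + 1) / (4 * ((m : ℝ) - (n : ℝ) - 1))) * x₂
          = 2 * c + 1)
      ↔ (c = ((n : ℝ) * x₁^2 - (m : ℝ) + 1) / (4 * ((m : ℝ) - (n : ℝ) - 1) * x₁) ∧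
         x₂ = ((2 * (m : ℝ) - 2 * (n : ℝ) - 1) * x₁^2
            - 4 * ((m : ℝ) - (n : ℝ) - 1) * x₁ + 2 * ((m : ℝ) - 1))
            / ((2 * (n : ℝ) + 1) * x₁) ∧
         (x₁ - 1) * (A * x₁^3 + B * x₁^2 + C * x₁ + D) = 0)) := by
  subst hA hB hC hD
  intro x₁ x₂ c hx₁ hx₂
  have hm1 : (m : ℝ) - 1 ≠ 0 :=
    sub_ne_zero.mpr (by exact_mod_cast (by omega : m ≠ 1))
  have hn1 : (n : ℝ) + 1 ≠ 0 := by positivity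
  have h2n : 2 * (n : ℝ) + 1 ≠ 0 := by positivity
  have hmn1 : (m : ℝ) - (n : ℝ) - 1 ≠ 0 := by
    have hne : (m : ℝ) ≠ (n : ℝ) + 1 := by exact_mod_cast hmn
    intro h; apply hne; linarith
  have hden : 4 * ((m : ℝ) - (n : ℝ) - 1) * x₁ ≠ 0 :=
    mul_ne_zero (mul_ne_zero four_ne_zero hmn1) hx₁
  have hden2 : (2 * (n : ℝ) + 1) * x₁ ≠ 0 := mul_ne_zero h2n hx₁
  constructor
  · rintro ⟨e1, e2, e3⟩
    field_simp at e1 e2 e3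
    have E1 : 4 * ((m:ℝ) - (n:ℝ) - 1) * x₁ * c = (n:ℝ) * x₁^2 - (m:ℝ) + 1 := by
      apply mul_left_cancel₀ hm1
      linear_combination -((m:ℝ) - 1) * e1
    have E3 : (2 * (n:ℝ) + 1) * x₁ * x₂ =
        (2*(m:ℝ) - 2*(n:ℝ) - 1) * x₁^2 - 4*((m:ℝ) - (n:ℝ) - 1)*x₁ + 2*((m:ℝ)-1) := by
      linear_combination (-x₁) * e3 - 2 * E1
    have E2 : (m:ℝ) * x₂^2 - ((n:ℝ) + 1) - 4 * c * ((n:ℝ) + 1 - (m:ℝ)) * x₂ = 0 := by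
      apply mul_left_cancel₀ hn1
      linear_combination ((n:ℝ) + 1) * e2
    refine ⟨?_, ?_, ?_⟩
    · rw [eq_div_iff hden]
      linear_combination E1
    · rw [eq_div_iff hden2]
      linear_combination E3
    · linear_combination ((2*(n:ℝ)+1)^2 * x₁^2) * E2
        - ((m:ℝ) * ((2*(n:ℝ)+1)*x₁*x₂
            + ((2*(m:ℝ) - 2*(n:ℝ) - 1) * x₁^2 - 4*((m:ℝ) - (n:ℝ) - 1)*x₁ + 2*((m:ℝ)-1)))
          + (2*(n:ℝ)+1) * (4*((m:ℝ)-(n:ℝ)-1)*x₁*c)) * E3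
        - ((2*(n:ℝ)+1) * ((2*(m:ℝ) - 2*(n:ℝ) - 1) * x₁^2
            - 4*((m:ℝ) - (n:ℝ) - 1)*x₁ + 2*((m:ℝ)-1))) * E1
  · rintro ⟨hc, hx2e, hq⟩
    rw [eq_div_iff hden] at hc
    rw [eq_div_iff hden2] at hx2e
    have E2 : (m:ℝ) * x₂^2 - ((n:ℝ) + 1) - 4 * c * ((n:ℝ) + 1 - (m:ℝ)) * x₂ = 0 := by
      have key : ((2*(n:ℝ)+1)*x₁)^2
          * ((m:ℝ) * x₂^2 - ((n:ℝ) + 1) - 4 * c * ((n:ℝ) + 1 - (m:ℝ)) * x₂) = 0 := by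
        linear_combination hq
          + ((m:ℝ) * ((2*(n:ℝ)+1)*x₁*x₂
              + ((2*(m:ℝ) - 2*(n:ℝ) - 1) * x₁^2 - 4*((m:ℝ) - (n:ℝ) - 1)*x₁ + 2*((m:ℝ)-1)))
            + (2*(n:ℝ)+1) * (4*((m:ℝ)-(n:ℝ)-1)*x₁*c)) * hx2e
          + ((2*(n:ℝ)+1) * ((2*(m:ℝ) - 2*(n:ℝ) - 1) * x₁^2
              - 4*((m:ℝ) - (n:ℝ) - 1)*x₁ + 2*((m:ℝ)-1))) * hc
      rcases mul_eq_zero.mp key with h | h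
      · exact absurd h (pow_ne_zero 2 hden2)
      · exact h
    refine ⟨?_, ?_, ?_⟩
    · field_simp
      linear_combination (-1 : ℝ) * hc
    · field_simp
      linear_combination E2
    · have E3 : (2*(m:ℝ)-1)*x₁ - (2*(n:ℝ)+1)*x₂ = (2*c+1)*(4*((m:ℝ)-(n:ℝ)-1)) := by
        apply mul_left_cancel₀ hx₁
        linear_combination -hx2e - 2*hc
      field_simp
      linear_combination E3
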